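/- For k ≥ 1, j ≥ 0, and n = k + j, the quantity D_C(k,j) = (n(2n-1)/k)·(4^k(k!)^2/(2k)! − 1) satisfies (√π·n(2n-1)/√k)·(1 − 1/√(πk) ) ≤ D_C(k,j) ≤ √π·n(2n-1)/√k for all k ≥ 2. -/

import Mathlib

open Nat Real Filter Finset Topology

noncomputable def bc (k : ℕ) : ℝ := 4^k * ((k ! : ℝ))^2 / ((2*k)! : ℝ)

lemma factR_pos (m : ℕ) : (0:ℝ) < (m ! : ℝ) := by exact_mod_cast m.factorial_pos

lemma bc_pos (k : ℕ) : 0 < bc k := by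
  have h1 := factR_pos k
  have h2 := factR_pos (2*k)
  unfold bc; positivity

lemma bc_succ (k : ℕ) : bc (k+1) = bc k * (2*k+2)/(2*k+1) := by
  have h1 : (2*(k+1))! = (2*k+2) * ((2*k+1) * (2*k)!) := by
    have h : 2*(k+1) = (2*k+1)+1 := by ring
    rw [h, Nat.factorial_succ, Nat.factorial_succ]
  have h2 : (k+1)! = (k+1) * k ! := Nat.factorial_succ k
  have h3 : ((2*k)! : ℝ) ≠ 0 := (factR_pos _).ne'
  have h4 : (2*(k:ℝ)+1) ≠ 0 := by positivity
  unfold bc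
  rw [h1, h2]
  push_cast
  field_simp
  ring

lemma bc_prod (k : ℕ) : bc k ^ 2 / (2*k+1) =
    ∏ i ∈ Finset.range k, ((2 : ℝ) * i + 2) / (2 * i + 1) * ((2 * i + 2) / (2 * i + 3)) := by
  induction k with
  | zero => simp [bc]
  | succ n ih =>
    rw [Finset.prod_range_succ, ← ih, bc_succ]
    have h1 : ((2*(n:ℝ)+1)) ≠ 0 := by positivity
    have h3 : ((2*(n:ℝ)+3)) ≠ 0 := by positivity
    push_cast
    field_simp
    ring

lemma g_mono : Monotone (fun k : ℕ => bc k ^ 2 / (2*k+1)) := by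
  apply monotone_nat_of_le_succ
  intro k
  simp only [bc_prod, Finset.prod_range_succ]
  have hnn : (0:ℝ) ≤ ∏ i ∈ Finset.range k, ((2 : ℝ) * i + 2) / (2 * i + 1) * ((2 * i + 2) / (2 * i + 3)) := by
    apply Finset.prod_nonneg
    intro i _
    positivity
  have h1 : (1:ℝ) ≤ ((2 : ℝ) * k + 2) / (2 * k + 1) * ((2 * k + 2) / (2 * k + 3)) := by
    rw [_root_.div_mul_div_comm, le_div_iff₀ (by positivity)]
    nlinarith [Nat.cast_nonneg (α := ℝ) k]
  nlinarith

lemma g_tendsto : Tendsto (fun k : ℕ => bc k ^ 2 / (2*k+1)) atTop (𝓝 (π/2)) := by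
  simp only [bc_prod]
  exact Real.tendsto_prod_pi_div_two

lemma bc_sq_le (k : ℕ) : bc k ^ 2 ≤ π * (2*k+1) / 2 := by
  have h := g_mono.ge_of_tendsto g_tendsto k
  have hpos : (0:ℝ) < 2*(k:ℝ)+1 := by positivity
  rw [div_le_iff₀ hpos] at h
  nlinarith

lemma h_anti : Antitone (fun m : ℕ => bc (m+1) ^ 2 / ((m:ℝ)+1)) := by
  apply antitone_nat_of_succ_le
  intro m
  have hrec : bc (m+2) = bc (m+1) * (2*(m:ℝ)+4)/(2*(m:ℝ)+3) := by
    have := bc_succ (m+1)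
    rw [this]; push_cast; ring
  have key : bc (m+2)^2 * ((m:ℝ)+1) ≤ bc (m+1)^2 * ((m:ℝ)+2) := by
    rw [hrec, div_pow, div_mul_eq_mul_div, div_le_iff₀ (by positivity)]
    nlinarith [sq_nonneg (bc (m+1)), Nat.cast_nonneg (α := ℝ) m,
      mul_nonneg (sq_nonneg (bc (m+1))) (Nat.cast_nonneg (α := ℝ) m)]
  show bc (m+1+1) ^ 2 / (((m+1:ℕ):ℝ)+1) ≤ bc (m+1) ^ 2 / ((m:ℝ)+1)
  rw [div_le_div_iff₀ (by positivity) (by positivity)]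
  push_cast
  nlinarith [key]

lemma h_tendsto : Tendsto (fun m : ℕ => bc (m+1) ^ 2 / ((m:ℝ)+1)) atTop (𝓝 π) := by
  have h1 : Tendsto (fun m : ℕ => bc (m+1) ^ 2 / (2*((m:ℝ)+1)+1)) atTop (𝓝 (π/2)) := by
    have h := g_tendsto.comp (tendsto_add_atTop_nat 1)
    simp only [Function.comp_def] at h
    refine h.congr fun m => ?_
    push_cast
    ring
  have h2 : Tendsto (fun m : ℕ => (2:ℝ) + 1/((m:ℝ)+1)) atTop (𝓝 (2+0)) :=
    Tendsto.add tendsto_const_nhds tendsto_one_div_add_atTop_nhds_zero_nat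
  have h3 := h1.mul h2
  have he : (π/2) * (2+0) = π := by ring
  rw [he] at h3
  apply h3.congr
  intro m
  have hm1 : ((m:ℝ)+1) ≠ 0 := by positivity
  have hm2 : (2*((m:ℝ)+1)+1) ≠ 0 := by positivity
  field_simp

lemma bc_sq_ge (k : ℕ) (hk : 1 ≤ k) : π * k ≤ bc k ^ 2 := by
  obtain ⟨m, rfl⟩ := Nat.exists_eq_add_of_le hk
  have h := h_anti.le_of_tendsto h_tendsto m
  have hpos : (0:ℝ) < (m:ℝ)+1 := by positivity
  rw [le_div_iff₀ hpos] at h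
  have e : 1 + m = m + 1 := by omega
  rw [e]
  push_cast
  nlinarith

lemma bc_ge_sqrt (k : ℕ) (hk : 1 ≤ k) : Real.sqrt (π * k) ≤ bc k := by
  have h := bc_sq_ge k hk
  calc Real.sqrt (π * k) ≤ Real.sqrt (bc k ^ 2) := Real.sqrt_le_sqrt h
    _ = bc k := Real.sqrt_sq (bc_pos k).le

lemma bc_le_sqrt_add_one (k : ℕ) (hk : 1 ≤ k) : bc k ≤ Real.sqrt (π * k) + 1 := by
  have h := bc_sq_le k
  have hs : (1:ℝ) ≤ Real.sqrt (π * k) := by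
    rw [show (1:ℝ) = Real.sqrt 1 from (Real.sqrt_one).symm]
    apply Real.sqrt_le_sqrt
    have h1 : (1:ℝ) ≤ (k:ℝ) := by exact_mod_cast hk
    nlinarith [Real.pi_gt_three]
  have hle : bc k ^ 2 ≤ (Real.sqrt (π * k) + 1)^2 := by
    have hsq : Real.sqrt (π * k) ^ 2 = π * k := Real.sq_sqrt (by positivity)
    have hpi : π ≤ 4 := by linarith [Real.pi_le_four]
    nlinarith
  calc bc k = Real.sqrt (bc k ^ 2) := (Real.sqrt_sq (bc_pos k).le).symm
    _ ≤ Real.sqrt ((Real.sqrt (π * k) + 1)^2) := Real.sqrt_le_sqrt hle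
    _ = Real.sqrt (π * k) + 1 := Real.sqrt_sq (by positivity)

/-- for k ≥ 2, n = k+j, the quantity
D_C(k,j) = (n(2n-1)/k)·(4^k(k!)^2/(2k)! − 1) satisfies
(√π·n(2n-1)/√k)·(1 − 1/√(πk)) ≤ D_C(k,j) ≤ √π·n(2n-1)/√k. -/
theorem expected_component_depth_asymptotics (k j : ℕ) (hk : 2 ≤ k) :
    (Real.sqrt Real.pi * ((k+j : ℕ) : ℝ) * (2*((k+j : ℕ) : ℝ) - 1) / Real.sqrt k) *
        (1 - 1 / Real.sqrt (Real.pi * k))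
      ≤ (((k+j : ℕ) : ℝ) * (2*((k+j : ℕ) : ℝ) - 1) / (k : ℝ)) *
          (4^k * ((k ! : ℝ))^2 / ((2*k)! : ℝ) - 1) ∧
    (((k+j : ℕ) : ℝ) * (2*((k+j : ℕ) : ℝ) - 1) / (k : ℝ)) *
        (4^k * ((k ! : ℝ))^2 / ((2*k)! : ℝ) - 1)
      ≤ Real.sqrt Real.pi * ((k+j : ℕ) : ℝ) * (2*((k+j : ℕ) : ℝ) - 1) / Real.sqrt k := by
  have hk1 : 1 ≤ k := le_trans (by norm_num) hk
  have hkR : (2:ℝ) ≤ (k:ℝ) := by exact_mod_cast hk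
  have hkpos : (0:ℝ) < (k:ℝ) := by linarith
  have hsk : (0:ℝ) < Real.sqrt k := Real.sqrt_pos.mpr hkpos
  have hsp : (0:ℝ) < Real.sqrt π := Real.sqrt_pos.mpr Real.pi_pos
  have hmul : Real.sqrt (π * k) = Real.sqrt π * Real.sqrt k :=
    Real.sqrt_mul Real.pi_pos.le k
  have hspk : (0:ℝ) < Real.sqrt (π * k) := by rw [hmul]; positivity
  have hkk : Real.sqrt k * Real.sqrt k = (k:ℝ) := Real.mul_self_sqrt hkpos.le
  have hpp : Real.sqrt π * Real.sqrt π = π := Real.mul_self_sqrt Real.pi_pos.le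
  set n : ℝ := ((k+j : ℕ) : ℝ) with hn
  have hnval : n = (k:ℝ) + (j:ℝ) := by rw [hn]; push_cast; ring
  have hA : (0:ℝ) ≤ n * (2*n - 1) := by
    have hj : (0:ℝ) ≤ (j:ℝ) := Nat.cast_nonneg j
    nlinarith
  have hbc : bc k = 4^k * ((k ! : ℝ))^2 / ((2*k)! : ℝ) := rfl
  have hlow := bc_ge_sqrt k hk1
  have hup := bc_le_sqrt_add_one k hk1
  constructor
  · -- lower bound
    have key : Real.sqrt π * n * (2*n - 1) / Real.sqrt k * (1 - 1 / Real.sqrt (π * k))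
        = (n * (2*n - 1)) * ((Real.sqrt (π * k) - 1) / k) := by
      rw [hmul]
      set s := Real.sqrt (k:ℝ) with hs
      rw [← hkk]
      field_simp
    rw [key, ← hbc]
    calc (n * (2*n - 1)) * ((Real.sqrt (π * k) - 1) / k)
        ≤ (n * (2*n - 1)) * ((bc k - 1) / k) := by
          apply mul_le_mul_of_nonneg_left _ hA
          apply div_le_div_of_nonneg_right (by linarith) hkpos.le
      _ = n * (2*n - 1) / (k:ℝ) * (bc k - 1) := by ring
  · -- upper bound
    rw [← hbc]
    have key : Real.sqrt π * n * (2*n - 1) / Real.sqrt k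
        = (n * (2*n - 1)) * (Real.sqrt (π * k) / k) := by
      rw [hmul]
      set s := Real.sqrt (k:ℝ) with hs
      rw [← hkk]
      field_simp
    rw [key]
    calc n * (2*n - 1) / (k:ℝ) * (bc k - 1)
        = (n * (2*n - 1)) * ((bc k - 1) / k) := by ring
      _ ≤ (n * (2*n - 1)) * (Real.sqrt (π * k) / k) := by
          apply mul_le_mul_of_nonneg_left _ hA
          apply div_le_div_of_nonneg_right (by linarith) hkpos.le
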